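/- Let U ∈ ℝ with U > 2 and set s := (√(4U+1) − 1)/2 and λ* := s² = (1/4)(√(4U+1) − 1)². Then λ* > 1, the function f(z) = (sech z)^s is a nontrivial bounded solution on ℝ of f''(z) + (−λ* + U·sech²z)·f(z) = 0, and consequently there exists ω > 0 (namely ω² = λ* − 1) such that the equation −f''(z) − U·sech²(z)·f(z) = (−ω² − 1)·f(z) admits a nontrivial bounded solution. -/

import Mathlib

/-- For `U > 2`, with `s = (√(4U+1) − 1)/2` and `λ* = s²`, the function
`f(z) = (sech z)^s` is a nontrivial bounded solution of
`f'' + (−λ* + U·sech²z)·f = 0` with `λ* > 1`, giving an unstable mode `ω² = λ* − 1 > 0`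
of the linearized perturbation equation. -/
theorem quartic_model_unstable_mode
    (U : ℝ) (hU : 2 < U)
    (s lamStar : ℝ)
    (hs : s = (Real.sqrt (4 * U + 1) - 1) / 2)
    (hlamStar : lamStar = s ^ 2)
    (f : ℝ → ℝ)
    (hf : ∀ z : ℝ, f z = (1 / Real.cosh z) ^ s) :
    lamStar = (1 / 4) * (Real.sqrt (4 * U + 1) - 1) ^ 2 ∧
    1 < lamStar ∧
    (∃ C : ℝ, ∀ z : ℝ, |f z| ≤ C) ∧
    (∃ z : ℝ, f z ≠ 0) ∧
    (∀ z : ℝ, deriv (deriv f) z + (-lamStar + U * (1 / Real.cosh z) ^ 2) * f z = 0) ∧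
    (∃ ω : ℝ, 0 < ω ∧ ω ^ 2 = lamStar - 1 ∧
      ∃ g : ℝ → ℝ,
        (∀ z : ℝ, -(deriv (deriv g) z) - U * (1 / Real.cosh z) ^ 2 * g z
          = (-(ω ^ 2) - 1) * g z) ∧
        (∃ C : ℝ, ∀ z : ℝ, |g z| ≤ C) ∧
        (∃ z : ℝ, g z ≠ 0)) := by
  have hU1 : (0:ℝ) ≤ 4 * U + 1 := by linarith
  have hsq : Real.sqrt (4 * U + 1) ^ 2 = 4 * U + 1 := Real.sq_sqrt hU1
  have hsqrt3 : 3 < Real.sqrt (4 * U + 1) := by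
    nlinarith [Real.sqrt_nonneg (4 * U + 1)]
  have hs1 : 1 < s := by rw [hs]; linarith
  have hsU : s ^ 2 + s = U := by rw [hs]; nlinarith
  have hcpos : ∀ z : ℝ, 0 < Real.cosh z := fun z => Real.cosh_pos z
  have hcne : ∀ z : ℝ, Real.cosh z ≠ 0 := fun z => (hcpos z).ne'
  have hfeq : ∀ z : ℝ, f z = Real.cosh z ^ (-s) := by
    intro z
    rw [hf z, one_div, Real.inv_rpow (hcpos z).le, ← Real.rpow_neg (hcpos z).le]
  -- first derivative
  have hd1 : ∀ z : ℝ, HasDerivAt f (Real.sinh z * (-s) * Real.cosh z ^ (-s - 1)) z := by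
    intro z
    have h := (Real.hasDerivAt_cosh z).rpow_const (p := -s) (Or.inl (hcne z))
    have : f = fun x => Real.cosh x ^ (-s) := funext hfeq
    rw [this]
    exact h
  have hderiv1 : deriv f = fun z => Real.sinh z * (-s) * Real.cosh z ^ (-s - 1) :=
    funext fun z => (hd1 z).deriv
  have hd2 : ∀ z : ℝ, HasDerivAt (deriv f)
      (Real.cosh z * (-s) * Real.cosh z ^ (-s - 1)
        + Real.sinh z * (-s) * (Real.sinh z * (-s - 1) * Real.cosh z ^ (-s - 1 - 1))) z := by
    intro z
    rw [hderiv1]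
    have h1 : HasDerivAt (fun x => Real.sinh x * (-s)) (Real.cosh z * (-s)) z :=
      (Real.hasDerivAt_sinh z).mul_const (-s)
    have h2 : HasDerivAt (fun x => Real.cosh x ^ (-s - 1))
        (Real.sinh z * (-s - 1) * Real.cosh z ^ (-s - 1 - 1)) z :=
      (Real.hasDerivAt_cosh z).rpow_const (Or.inl (hcne z))
    exact h1.mul h2
  have key : ∀ z : ℝ, deriv (deriv f) z + (-lamStar + U * (1 / Real.cosh z) ^ 2) * f z = 0 := by
    intro z
    rw [(hd2 z).deriv, hfeq z]
    set c := Real.cosh z with hc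
    have hA : c ^ (-s - 1) = c ^ (-s) * c⁻¹ := by
      rw [← Real.rpow_neg_one c, ← Real.rpow_add (hcpos z)]
      ring_nf
      rfl
    have hB : c ^ (-s - 1 - 1) = c ^ (-s) * c⁻¹ * c⁻¹ := by
      rw [← Real.rpow_neg_one c, ← Real.rpow_add (hcpos z), ← Real.rpow_add (hcpos z)]
      ring_nf
      rfl
    have hsinh : Real.sinh z ^ 2 = c ^ 2 - 1 := by
      have := Real.cosh_sq z
      nlinarith [this]
    rw [hA, hB, hlamStar]
    have hcne' : c ≠ 0 := hcne z
    generalize c ^ (-s) = A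
    field_simp
    rw [← hsU]
    linear_combination (s ^ 2 + s) * A * hsinh
  refine ⟨by rw [hlamStar, hs]; ring, ?_, ⟨1, ?_⟩, ⟨0, ?_⟩, key, ?_⟩
  · rw [hlamStar]; nlinarith
  · intro z
    rw [hfeq z, abs_of_nonneg (Real.rpow_nonneg (hcpos z).le _)]
    apply Real.rpow_le_one_of_one_le_of_nonpos (Real.one_le_cosh z) (by linarith)
  · rw [hfeq 0]; simp
  · have hlam1 : 1 < lamStar := by rw [hlamStar]; nlinarith
    refine ⟨Real.sqrt (lamStar - 1), Real.sqrt_pos.mpr (by linarith), ?_, f, ?_, ⟨1, ?_⟩, ⟨0, ?_⟩⟩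
    · exact Real.sq_sqrt (by linarith)
    · intro z
      have h := key z
      have hω : Real.sqrt (lamStar - 1) ^ 2 = lamStar - 1 := Real.sq_sqrt (by linarith)
      rw [hω]
      nlinarith [h]
    · intro z
      rw [hfeq z, abs_of_nonneg (Real.rpow_nonneg (hcpos z).le _)]
      apply Real.rpow_le_one_of_one_le_of_nonpos (Real.one_le_cosh z) (by linarith)
    · rw [hfeq 0]; simp
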